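/- Let X be a real random variable and ν > 0. If E[X⁴] < ∞, then |2·E[X/(1 + X²/ν)] − E[X/(1 + 2X²/ν)] − E[X]| ≤ E[X⁴]/ν^{3/2}. If E[|X|⁵] < ∞, then |2·E[X/(1 + X²/ν)] − E[X/(1 + 2X²/ν)] − E[X]| ≤ 2·E[|X|⁵]/ν². -/

import Mathlib

open MeasureTheory

lemma rbb_pt_id {ν x : ℝ} (hν : 0 < ν) :
    2 * (x / (1 + x ^ 2 / ν)) - x / (1 + 2 * x ^ 2 / ν) - x
      = -(2 * x ^ 5) / ((ν + x ^ 2) * (ν + 2 * x ^ 2)) := by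
  have h1 : ν + x ^ 2 ≠ 0 := by positivity
  have h2 : ν + 2 * x ^ 2 ≠ 0 := by positivity
  have h3 : (1 : ℝ) + x ^ 2 / ν ≠ 0 := by positivity
  have h4 : (1 : ℝ) + 2 * x ^ 2 / ν ≠ 0 := by positivity
  field_simp
  ring

lemma rbb_pt_abs {ν x : ℝ} (hν : 0 < ν) :
    |2 * (x / (1 + x ^ 2 / ν)) - x / (1 + 2 * x ^ 2 / ν) - x|
      = 2 * |x| ^ 5 / ((ν + x ^ 2) * (ν + 2 * x ^ 2)) := by
  rw [rbb_pt_id hν, abs_div, abs_neg]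
  have hD : 0 < (ν + x ^ 2) * (ν + 2 * x ^ 2) := by positivity
  rw [abs_of_pos hD, abs_mul, abs_pow]
  norm_num

lemma rbb_ptA {ν x : ℝ} (hν : 0 < ν) :
    2 * |x| ^ 5 / ((ν + x ^ 2) * (ν + 2 * x ^ 2)) ≤ x ^ 4 / ν ^ ((3 : ℝ) / 2) := by
  set s := Real.sqrt ν with hs
  have hs0 : 0 < s := Real.sqrt_pos.2 hν
  have hs2 : s ^ 2 = ν := Real.sq_sqrt hν.le
  have hpow : ν ^ ((3 : ℝ) / 2) = s ^ 3 := by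
    rw [show ((3 : ℝ) / 2) = (1 / 2 : ℝ) * ((3 : ℕ) : ℝ) by norm_num,
      Real.rpow_mul hν.le, Real.rpow_natCast, ← Real.sqrt_eq_rpow]
  rw [hpow, div_le_div_iff₀ (by positivity) (by positivity)]
  have h4 : x ^ 4 = |x| ^ 4 := by
    rw [pow_abs, abs_of_nonneg (by positivity : (0:ℝ) ≤ x ^ 4)]
  have ha : x ^ 2 = |x| ^ 2 := (sq_abs x).symm
  rw [← hs2, h4, ha]
  nlinarith [mul_nonneg (mul_nonneg (pow_nonneg (abs_nonneg x) 4) (sq_nonneg (s - |x|)))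
      (by positivity : (0:ℝ) ≤ s ^ 2 + 2 * |x| ^ 2),
    mul_nonneg (mul_nonneg (pow_nonneg (abs_nonneg x) 7) (abs_nonneg x)) hs0.le,
    pow_nonneg (abs_nonneg x) 7, hs0.le, abs_nonneg x]

lemma rbb_ptB {ν x : ℝ} (hν : 0 < ν) :
    2 * |x| ^ 5 / ((ν + x ^ 2) * (ν + 2 * x ^ 2)) ≤ 2 * |x| ^ 5 / ν ^ 2 := by
  rw [div_le_div_iff₀ (by positivity) (by positivity)]
  nlinarith [mul_nonneg (pow_nonneg (abs_nonneg x) 5) (mul_nonneg hν.le (sq_nonneg x)),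
    mul_nonneg (pow_nonneg (abs_nonneg x) 5) (sq_nonneg (x ^ 2))]

lemma rbb_bnd {ν x c : ℝ} (hν : 0 < ν) (hc : 1 ≤ c) :
    |x / (1 + c * x ^ 2 / ν)| ≤ Real.sqrt ν := by
  set s := Real.sqrt ν with hs
  have hs0 : 0 < s := Real.sqrt_pos.2 hν
  have hs2 : s ^ 2 = ν := Real.sq_sqrt hν.le
  have hd : (0:ℝ) < 1 + c * x ^ 2 / ν := by
    have : 0 ≤ c * x ^ 2 / ν := by positivity
    linarith
  rw [abs_div, abs_of_pos hd, div_le_iff₀ hd]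
  have hrw : s * (1 + c * x ^ 2 / ν) = s * (ν + c * x ^ 2) / ν := by
    field_simp
  rw [hrw, le_div_iff₀ hν, ← hs2]
  nlinarith [mul_nonneg hs0.le (sq_nonneg (s - |x|)),
    mul_nonneg (mul_nonneg (sub_nonneg.2 hc) (sq_nonneg x)) hs0.le, abs_nonneg x,
    sq_abs x, mul_nonneg (mul_nonneg hs0.le hs0.le) (abs_nonneg x)]

lemma rbb_main_aux {Ω : Type*} [MeasurableSpace Ω]
    (P : Measure Ω) [IsProbabilityMeasure P]
    {X : Ω → ℝ} (hXmeas : Measurable X) {ν : ℝ} (hν : 0 < ν)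
    (hXint : Integrable X P) {B : Ω → ℝ} (hB : Integrable B P)
    (hpt : ∀ ω, |2 * (X ω / (1 + (X ω) ^ 2 / ν)) - X ω / (1 + 2 * (X ω) ^ 2 / ν) - X ω| ≤ B ω) :
    |2 * (∫ ω, X ω / (1 + (X ω) ^ 2 / ν) ∂P)
        - (∫ ω, X ω / (1 + 2 * (X ω) ^ 2 / ν) ∂P) - ∫ ω, X ω ∂P| ≤ ∫ ω, B ω ∂P := by
  have hm1 : Measurable (fun ω => X ω / (1 + (X ω) ^ 2 / ν)) := by
    apply hXmeas.div
    exact measurable_const.add ((hXmeas.pow_const 2).div_const ν)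
  have hm2 : Measurable (fun ω => X ω / (1 + 2 * (X ω) ^ 2 / ν)) := by
    apply hXmeas.div
    exact measurable_const.add (((hXmeas.pow_const 2).const_mul 2).div_const ν)
  have hf1 : Integrable (fun ω => X ω / (1 + (X ω) ^ 2 / ν)) P := by
    refine Integrable.mono' (integrable_const (Real.sqrt ν)) hm1.aestronglyMeasurable
      (Filter.Eventually.of_forall fun ω => ?_)
    rw [Real.norm_eq_abs]
    have := rbb_bnd (x := X ω) (c := 1) hν le_rfl
    simpa using this
  have hf2 : Integrable (fun ω => X ω / (1 + 2 * (X ω) ^ 2 / ν)) P := by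
    refine Integrable.mono' (integrable_const (Real.sqrt ν)) hm2.aestronglyMeasurable
      (Filter.Eventually.of_forall fun ω => ?_)
    rw [Real.norm_eq_abs]
    exact rbb_bnd (x := X ω) (c := 2) hν one_le_two
  have hg : Integrable
      (fun ω => 2 * (X ω / (1 + (X ω) ^ 2 / ν)) - X ω / (1 + 2 * (X ω) ^ 2 / ν) - X ω) P :=
    ((hf1.const_mul 2).sub hf2).sub hXint
  have hsub1 : Integrable
      (fun ω => 2 * (X ω / (1 + (X ω) ^ 2 / ν)) - X ω / (1 + 2 * (X ω) ^ 2 / ν)) P :=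
    (hf1.const_mul 2).sub hf2
  have heq : 2 * (∫ ω, X ω / (1 + (X ω) ^ 2 / ν) ∂P)
        - (∫ ω, X ω / (1 + 2 * (X ω) ^ 2 / ν) ∂P) - ∫ ω, X ω ∂P
      = ∫ ω, (2 * (X ω / (1 + (X ω) ^ 2 / ν)) - X ω / (1 + 2 * (X ω) ^ 2 / ν) - X ω) ∂P := by
    rw [integral_sub hsub1 hXint,
      integral_sub (show Integrable (fun ω => 2 * (X ω / (1 + (X ω) ^ 2 / ν))) P from
        hf1.const_mul 2) hf2, integral_const_mul]
  rw [heq]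
  calc |∫ ω, (2 * (X ω / (1 + (X ω) ^ 2 / ν)) - X ω / (1 + 2 * (X ω) ^ 2 / ν) - X ω) ∂P|
      ≤ ∫ ω, |2 * (X ω / (1 + (X ω) ^ 2 / ν)) - X ω / (1 + 2 * (X ω) ^ 2 / ν) - X ω| ∂P :=
        by
          exact
            norm_integral_le_integral_norm (μ := P)
              (fun ω => 2 * (X ω / (1 + (X ω) ^ 2 / ν)) - X ω / (1 + 2 * (X ω) ^ 2 / ν) - X ω)
    _ ≤ ∫ ω, B ω ∂P := integral_mono hg.abs hB hpt

/-- Bias bounds for the Richardson-extrapolated robust location estimand: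
if `E[X⁴] < ∞` then `|2·E[X/(1+X²/ν)] − E[X/(1+2X²/ν)] − E[X]| ≤ E[X⁴]/ν^{3/2}`;
if `E[|X|⁵] < ∞` then `|2·E[X/(1+X²/ν)] − E[X/(1+2X²/ν)] − E[X]| ≤ 2·E[|X|⁵]/ν²`. -/
theorem richardson_bias_bound {Ω : Type*} [MeasurableSpace Ω]
    (P : Measure Ω) [IsProbabilityMeasure P]
    {X : Ω → ℝ} (hXmeas : Measurable X) {ν : ℝ} (hν : 0 < ν) :
    (Integrable (fun ω => (X ω) ^ 4) P →
      |2 * (∫ ω, X ω / (1 + (X ω) ^ 2 / ν) ∂P)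
          - (∫ ω, X ω / (1 + 2 * (X ω) ^ 2 / ν) ∂P) - ∫ ω, X ω ∂P|
        ≤ (∫ ω, (X ω) ^ 4 ∂P) / ν ^ ((3 : ℝ) / 2)) ∧
    (Integrable (fun ω => |X ω| ^ 5) P →
      |2 * (∫ ω, X ω / (1 + (X ω) ^ 2 / ν) ∂P)
          - (∫ ω, X ω / (1 + 2 * (X ω) ^ 2 / ν) ∂P) - ∫ ω, X ω ∂P|
        ≤ 2 * (∫ ω, |X ω| ^ 5 ∂P) / ν ^ 2) := by
  constructor
  · intro h4
    have hXint : Integrable X P := by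
      refine Integrable.mono' (h4.add (integrable_const 1)) hXmeas.aestronglyMeasurable
        (Filter.Eventually.of_forall fun ω => ?_)
      rw [Real.norm_eq_abs]
      simp only [Pi.add_apply]
      have h : (X ω) ^ 4 = |X ω| ^ 4 := by
        rw [pow_abs, abs_of_nonneg (by positivity : (0:ℝ) ≤ X ω ^ 4)]
      rw [h]
      rcases le_total (|X ω|) 1 with hb | hb
      · nlinarith [pow_nonneg (abs_nonneg (X ω)) 4]
      · nlinarith [pow_le_pow_right₀ hb (by norm_num : 1 ≤ 4), abs_nonneg (X ω)]
    have hB : Integrable (fun ω => (X ω) ^ 4 / ν ^ ((3 : ℝ) / 2)) P := h4.div_const _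
    have := rbb_main_aux P hXmeas hν hXint hB (fun ω => by
      rw [rbb_pt_abs hν]; exact rbb_ptA hν)
    rwa [integral_div] at this
  · intro h5
    have hXint : Integrable X P := by
      refine Integrable.mono' (h5.add (integrable_const 1)) hXmeas.aestronglyMeasurable
        (Filter.Eventually.of_forall fun ω => ?_)
      rw [Real.norm_eq_abs]
      simp only [Pi.add_apply]
      rcases le_total (|X ω|) 1 with hb | hb
      · nlinarith [pow_nonneg (abs_nonneg (X ω)) 5]
      · nlinarith [pow_le_pow_right₀ hb (by norm_num : 1 ≤ 5), abs_nonneg (X ω)]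
    have hB : Integrable (fun ω => 2 * |X ω| ^ 5 / ν ^ 2) P := (h5.const_mul 2).div_const _
    have := rbb_main_aux P hXmeas hν hXint hB (fun ω => by
      rw [rbb_pt_abs hν]; exact rbb_ptB hν)
    rwa [integral_div, integral_const_mul] at this
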